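/- If real numbers λ₁ ≥ λ₂ ≥ ... ≥ λₙ satisfy ∑ᵢ arctan(λᵢ) ≥ (n-2)·π/2, then λ₁ + (n-1)·λₙ ≥ 0. -/

import Mathlib

open Real Finset

lemma my_arctan_add_le {a b : ℝ} (ha : 0 ≤ a) (hb : 0 ≤ b) :
    Real.arctan (a + b) ≤ Real.arctan a + Real.arctan b := by
  rcases lt_or_ge (a * b) 1 with h | h
  · rw [Real.arctan_add h]
    apply Real.arctan_strictMono.monotone
    have h1 : 0 < 1 - a * b := by linarith
    rw [le_div_iff₀ h1]
    nlinarith [mul_nonneg ha hb, mul_nonneg (add_nonneg ha hb) (mul_nonneg ha hb)]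
  · have hb' : 0 < b := by nlinarith
    have hinv : b⁻¹ ≤ a := by
      rw [inv_eq_one_div, div_le_iff₀ hb']; nlinarith
    have h2 : Real.arctan b⁻¹ ≤ Real.arctan a := Real.arctan_strictMono.monotone hinv
    rw [Real.arctan_inv_of_pos hb'] at h2
    have h3 := Real.arctan_lt_pi_div_two (a + b)
    linarith

lemma my_arctan_nat_mul_le (m : ℕ) {t : ℝ} (ht : 0 ≤ t) :
    Real.arctan ((m : ℝ) * t) ≤ (m : ℝ) * Real.arctan t := by
  induction m with
  | zero => simp
  | succ k ih =>
    push_cast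
    have h1 : Real.arctan ((k : ℝ) * t + t) ≤ Real.arctan ((k : ℝ) * t) + Real.arctan t :=
      my_arctan_add_le (by positivity) ht
    have h2 : (0 : ℝ) ≤ Real.arctan t := by rw [← Real.arctan_zero]; exact Real.arctan_strictMono.monotone ht
    calc Real.arctan (((k : ℝ) + 1) * t) = Real.arctan ((k : ℝ) * t + t) := by ring_nf
      _ ≤ Real.arctan ((k : ℝ) * t) + Real.arctan t := h1
      _ ≤ (k : ℝ) * Real.arctan t + Real.arctan t := by linarith
      _ = ((k : ℝ) + 1) * Real.arctan t := by ring

/-- If `λ₁ ≥ λ₂ ≥ ... ≥ λₙ` satisfy `∑ arctan λᵢ ≥ (n-2)π/2`, then `λ₁ + (n-1)λₙ ≥ 0`. -/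
theorem stmt_2 (n : ℕ) (hn : 2 ≤ n) (lam : Fin n → ℝ)
    (hmono : ∀ i j : Fin n, i ≤ j → lam j ≤ lam i)
    (hsum : ((n : ℝ) - 2) * (Real.pi / 2) ≤ ∑ i, Real.arctan (lam i)) :
    0 ≤ lam ⟨0, by omega⟩ + ((n : ℝ) - 1) * lam ⟨n - 1, by omega⟩ := by
  have hn0 : 0 < n := by omega
  set i0 : Fin n := ⟨0, by omega⟩
  set iN : Fin n := ⟨n - 1, by omega⟩
  set a := lam i0
  set b := lam iN
  have hnR : (2 : ℝ) ≤ n := by exact_mod_cast hn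
  have hab : b ≤ a := hmono i0 iN (by simp [i0, iN, Fin.le_def])
  rcases le_or_gt 0 b with hb | hb
  · nlinarith
  -- b < 0
  by_contra hcon
  push_neg at hcon
  set μ := -b with hμdef
  have hμ : 0 < μ := by simp [hμdef]; linarith
  have haμ : a < ((n : ℝ) - 1) * μ := by
    have : a + ((n : ℝ) - 1) * b < 0 := hcon
    nlinarith
  -- sum bound
  have hsum2 : ∑ i, Real.arctan (lam i) ≤ ((n : ℝ) - 1) * Real.arctan a + Real.arctan b := by
    have hmem : iN ∈ (univ : Finset (Fin n)) := mem_univ _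
    rw [← Finset.sum_erase_add _ _ hmem]
    have hbound : ∑ i ∈ (univ : Finset (Fin n)).erase iN, Real.arctan (lam i)
        ≤ ((univ : Finset (Fin n)).erase iN).card • Real.arctan a := by
      apply Finset.sum_le_card_nsmul
      intro i _
      exact Real.arctan_strictMono.monotone (hmono i0 i (by simp [i0, Fin.le_def]))
    have hcard : ((univ : Finset (Fin n)).erase iN).card = n - 1 := by
      rw [Finset.card_erase_of_mem hmem, Finset.card_univ, Fintype.card_fin]
    rw [hcard] at hbound
    have : ((n - 1 : ℕ) : ℝ) = (n : ℝ) - 1 := by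
      have : (1 : ℕ) ≤ n := by omega
      push_cast [this]; ring
    rw [nsmul_eq_mul, this] at hbound
    linarith
  -- strict bound on arctan a
  have harc : Real.arctan a < Real.arctan (((n : ℝ) - 1) * μ) := Real.arctan_strictMono haμ
  have hnμ : 0 < ((n : ℝ) - 1) * μ := by nlinarith
  set t := (((n : ℝ) - 1) * μ)⁻¹ with htdef
  have ht : 0 < t := by positivity
  have eq1 : Real.arctan (((n : ℝ) - 1) * μ) = π / 2 - Real.arctan t := by
    have := Real.arctan_inv_of_pos hnμ
    rw [← htdef] at this
    linarith
  have hμinv : μ⁻¹ = ((n : ℝ) - 1) * t := by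
    rw [htdef]
    field_simp
    rw [div_self (by linarith)]
  have eq2 : Real.arctan μ = π / 2 - Real.arctan (((n : ℝ) - 1) * t) := by
    have := Real.arctan_inv_of_pos hμ
    rw [hμinv] at this
    linarith
  have hbneg : Real.arctan b = -Real.arctan μ := by
    rw [hμdef, Real.arctan_neg]; ring
  -- key inequality: arctan((n-1)t) ≤ (n-1) arctan t
  have key : Real.arctan (((n : ℝ) - 1) * t) ≤ ((n : ℝ) - 1) * Real.arctan t := by
    have h := my_arctan_nat_mul_le (n - 1) ht.le
    have hc : ((n - 1 : ℕ) : ℝ) = (n : ℝ) - 1 := by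
      have : (1 : ℕ) ≤ n := by omega
      push_cast [this]; ring
    rwa [hc] at h
  have hprod : ((n : ℝ) - 1) * Real.arctan a < ((n : ℝ) - 1) * Real.arctan (((n : ℝ) - 1) * μ) :=
    mul_lt_mul_of_pos_left harc (by linarith)
  rw [eq1] at hprod
  linarith [hsum, hsum2, hprod, key, eq2, hbneg]
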